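/- Uniqueness of weight-t and weight-(1−t) outputs: let m ≤ n be positive integers and suppose L^m(𝔦,𝔧;𝔨,𝔩) ∈ {t, 1−t} for some fixed 𝔦,𝔧,𝔨,𝔩 ∈ {0,1}^m. Then for any i, j ∈ {0,1}^n whose truncations to the first m coordinates equal 𝔦 and 𝔧 respectively, there exist unique k¹, l¹ ∈ {0,1}^n with L^n(i,j;k¹,l¹) = t, unique k², l² ∈ {0,1}^n with L^n(i,j;k²,l²) = 1−t, and L^n(i,j;k,l) = 0 for all other pairs (k,l). -/

import Mathlib

open Finset

/-- The single-colored vertex weight matrix `L¹`. -/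
def L1 (t : ℝ) : Bool → Bool → Bool → Bool → ℝ
  | true,  true,  true,  true  => t
  | true,  true,  false, false => 1 - t
  | true,  false, true,  false => 1
  | false, true,  false, true  => 1
  | false, false, false, false => 1
  | _, _, _, _ => 0

/-- The `r`-fold projection `s_r(x)`: parity of the sum of the first `r` coordinates. -/
def sproj {n : ℕ} (x : Fin n → Bool) (r : Fin n) : Bool :=
  decide ((∑ m ∈ Finset.univ.filter (fun m => m ≤ r), (if x m then (1 : ℕ) else 0)) % 2 = 1)

/-- The modified minimum `𝔪𝔦𝔫` of a (nonempty) family: `0` if both `t` and `1 - t`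
occur among its values, the ordinary minimum otherwise. -/
noncomputable def mminOver (t : ℝ) {n : ℕ} (f : Fin (n + 1) → ℝ) : ℝ := by
  classical
  exact if (∃ r, f r = t) ∧ (∃ r, f r = 1 - t) then 0
    else Finset.univ.inf' Finset.univ_nonempty f

/-- Binary modified minimum. -/
noncomputable def mmin (t x y : ℝ) : ℝ := by
  classical
  exact if (x = t ∧ y = 1 - t) ∨ (x = 1 - t ∧ y = t) then 0 else min x y

/-- The colored vertex weight matrix `Lⁿ` (here with `n + 1` colors). -/
noncomputable def Ln (t : ℝ) {n : ℕ} (i j k l : Fin (n + 1) → Bool) : ℝ :=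
  mminOver t (fun r => L1 t (sproj i r) (sproj j r) (sproj k r) (sproj l r))

/-! ### Auxiliary lemmas on `sproj` -/

lemma filter_le_zero' {n : ℕ} (h : 0 < n + 1) :
    (Finset.univ.filter (fun m : Fin (n+1) => m ≤ ⟨0, h⟩)) = {⟨0, h⟩} := by
  ext m; simp only [Finset.mem_filter, Finset.mem_univ, true_and, Finset.mem_singleton, Fin.le_def, Fin.ext_iff]; omega

lemma filter_le_succ' {n v : ℕ} (h : v + 1 < n + 1) :
    (Finset.univ.filter (fun m : Fin (n+1) => m ≤ ⟨v+1, h⟩)) =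
      insert ⟨v+1, h⟩ (Finset.univ.filter (fun m : Fin (n+1) => m ≤ ⟨v, by omega⟩)) := by
  ext m; simp [Fin.le_def, Fin.ext_iff]; omega

lemma sproj_zero {n : ℕ} (x : Fin (n+1) → Bool) (h : 0 < n + 1) :
    sproj x ⟨0, h⟩ = x ⟨0, h⟩ := by
  unfold sproj
  rw [filter_le_zero', Finset.sum_singleton]
  cases x ⟨0, h⟩ <;> simp

lemma sproj_succ {n v : ℕ} (x : Fin (n+1) → Bool) (h : v + 1 < n + 1) :
    sproj x ⟨v+1, h⟩ = xor (x ⟨v+1, h⟩) (sproj x ⟨v, by omega⟩) := by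
  unfold sproj
  rw [filter_le_succ', Finset.sum_insert (by simp [Fin.le_def])]
  set S := ∑ m ∈ Finset.univ.filter (fun m : Fin (n+1) => m ≤ (⟨v, by omega⟩ : Fin (n+1))),
    (if x m then (1:ℕ) else 0) with hS
  cases x ⟨v+1, h⟩ <;> by_cases hm : S % 2 = 1 <;> simp [hm] <;> omega

/-- The inverse of `sproj`. -/
def unsproj {n : ℕ} (s : Fin (n+1) → Bool) (r : Fin (n+1)) : Bool :=
  if h : r.1 = 0 then s r else xor (s r) (s ⟨r.1 - 1, by omega⟩)

lemma sproj_unsproj {n : ℕ} (s : Fin (n+1) → Bool) (r : Fin (n+1)) :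
    sproj (unsproj s) r = s r := by
  obtain ⟨v, hv⟩ := r
  induction v with
  | zero => rw [sproj_zero]; simp [unsproj]
  | succ v ih =>
      rw [sproj_succ, ih (by omega)]
      simp only [unsproj]
      simp only [dif_neg (Nat.succ_ne_zero v), Nat.add_sub_cancel]
      cases s ⟨v+1, hv⟩ <;> cases s ⟨v, by omega⟩ <;> simp

lemma unsproj_sproj {n : ℕ} (x : Fin (n+1) → Bool) : unsproj (sproj x) = x := by
  funext r
  obtain ⟨v, hv⟩ := r
  cases v with
  | zero =>
      simp only [unsproj, dif_pos rfl]
      exact sproj_zero x hv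
  | succ v =>
      simp only [unsproj]
      simp only [dif_neg (Nat.succ_ne_zero v), Nat.add_sub_cancel]
      rw [sproj_succ]
      cases x ⟨v+1, hv⟩ <;> cases sproj x ⟨v, by omega⟩ <;> simp

lemma sproj_injective {n : ℕ} {x y : Fin (n+1) → Bool} (h : sproj x = sproj y) : x = y := by
  rw [← unsproj_sproj x, h, unsproj_sproj]

lemma sproj_castLE {m n : ℕ} (h : m + 1 ≤ n + 1) (i : Fin (n+1) → Bool) (r : Fin (m+1)) :
    sproj (fun r' : Fin (m + 1) => i (Fin.castLE h r')) r = sproj i (Fin.castLE h r) := by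
  obtain ⟨v, hv⟩ := r
  induction v with
  | zero =>
      rw [show Fin.castLE h ⟨0, hv⟩ = ⟨0, by omega⟩ from rfl, sproj_zero, sproj_zero]
      rfl
  | succ v ih =>
      rw [show Fin.castLE h ⟨v+1, hv⟩ = ⟨v+1, by omega⟩ from rfl, sproj_succ, sproj_succ,
        ih (by omega)]
      rfl

/-! ### Auxiliary lemmas on `L1` -/

section Num
variable {t : ℝ} (ht0 : 0 < t) (ht1 : t < 1) (ht2 : t ≠ 1 / 2)
include ht0 ht1 ht2

set_option linter.unusedSectionVars false
set_option linter.unreachableTactic false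
set_option linter.unusedTactic false

lemma L1_range (a b c d : Bool) :
    L1 t a b c d = 0 ∨ L1 t a b c d = t ∨ L1 t a b c d = 1 - t ∨ L1 t a b c d = 1 := by
  cases a <;> cases b <;> cases c <;> cases d <;> simp [L1]

lemma L1_eq_t_or_one (a b c d : Bool) :
    (L1 t a b c d = t ∨ L1 t a b c d = 1) ↔ (c = a ∧ d = b) := by
  cases a <;> cases b <;> cases c <;> cases d <;>
    simp [L1] <;> (try constructor) <;> intro h <;> first
      | (exact ht2 (by linarith)) | linarith

lemma L1_eq_onet_or_one (a b c d : Bool) :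
    (L1 t a b c d = 1 - t ∨ L1 t a b c d = 1) ↔ (c = (a && !b) ∧ d = (!a && b)) := by
  cases a <;> cases b <;> cases c <;> cases d <;>
    simp [L1] <;> (try constructor) <;> intro h <;> first
      | (exact ht2 (by linarith)) | linarith

lemma L1_tt_of (a b c d : Bool) (h : L1 t a b c d = t ∨ L1 t a b c d = 1 - t) :
    a = true ∧ b = true := by
  cases a <;> cases b <;> cases c <;> cases d <;>
    simp_all [L1] <;> rcases h with h | h <;> first
      | (exact ht2 (by linarith)) | linarith | skip

lemma L1_tt_mem (c d : Bool) :
    L1 t true true c d = 0 ∨ L1 t true true c d = t ∨ L1 t true true c d = 1 - t := by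
  cases c <;> cases d <;> simp [L1]

end Num

/-! ### Auxiliary lemmas on `mminOver` -/

lemma mminOver_attained {n : ℕ} (t : ℝ) (f : Fin (n+1) → ℝ) (h : mminOver t f ≠ 0) :
    ∃ r, f r = mminOver t f := by
  classical
  by_cases hb : (∃ r, f r = t) ∧ (∃ r, f r = 1 - t)
  · exfalso; apply h; unfold mminOver; rw [if_pos hb]
  · unfold mminOver
    rw [if_neg hb]
    obtain ⟨r, _, hr⟩ := Finset.exists_mem_eq_inf' (Finset.univ_nonempty (α := Fin (n+1))) f
    exact ⟨r, hr.symm⟩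

lemma mminOver_eq_iff {n : ℕ} (t : ℝ) (f : Fin (n+1) → ℝ)
    (ht0 : 0 < t) (ht1 : t ≤ 1) (hne : t ≠ 1 - t)
    (hrange : ∀ r, f r = 0 ∨ f r = t ∨ f r = 1 - t ∨ f r = 1) :
    mminOver t f = t ↔ (∀ r, f r = t ∨ f r = 1) ∧ (∃ r, f r = t) := by
  constructor
  · intro h
    have h0 : mminOver t f ≠ 0 := by rw [h]; exact ht0.ne'
    obtain ⟨r0, hr0⟩ := mminOver_attained t f h0
    rw [h] at hr0
    have hnb : ¬ ((∃ r, f r = t) ∧ (∃ r, f r = 1 - t)) := by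
      intro hb
      unfold mminOver at h
      rw [if_pos hb] at h
      exact ht0.ne' h.symm
    have hinf : Finset.univ.inf' Finset.univ_nonempty f = t := by
      unfold mminOver at h
      rwa [if_neg hnb] at h
    refine ⟨fun r => ?_, ⟨r0, hr0⟩⟩
    have hle : t ≤ f r := hinf ▸ Finset.inf'_le f (Finset.mem_univ r)
    rcases hrange r with h' | h' | h' | h'
    · linarith
    · exact Or.inl h'
    · exact absurd ⟨⟨r0, hr0⟩, ⟨r, h'⟩⟩ hnb
    · exact Or.inr h'
  · rintro ⟨hall, r0, hr0⟩
    have hnb : ¬ ((∃ r, f r = t) ∧ (∃ r, f r = 1 - t)) := by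
      rintro ⟨-, r, hr⟩
      rcases hall r with h' | h' <;> rw [hr] at h'
      · exact hne h'.symm
      · linarith
    unfold mminOver
    rw [if_neg hnb]
    apply le_antisymm
    · exact hr0 ▸ Finset.inf'_le f (Finset.mem_univ r0)
    · apply Finset.le_inf'
      intro r _
      rcases hall r with h' | h' <;> linarith [h'.ge]

lemma mminOver_symm {n : ℕ} (t : ℝ) (f : Fin (n+1) → ℝ) :
    mminOver t f = mminOver (1 - t) f := by
  unfold mminOver
  rw [show (1:ℝ) - (1 - t) = t by ring]
  exact if_congr and_comm rfl rfl

lemma mminOver_mem3 {n : ℕ} (t : ℝ) (f : Fin (n+1) → ℝ)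
    (hrange : ∀ r, f r = 0 ∨ f r = t ∨ f r = 1 - t ∨ f r = 1)
    (hx : ∃ r, f r = 0 ∨ f r = t ∨ f r = 1 - t)
    (ht0 : 0 < t) (ht1 : t < 1) :
    mminOver t f = 0 ∨ mminOver t f = t ∨ mminOver t f = 1 - t := by
  classical
  unfold mminOver
  split
  · exact Or.inl rfl
  · obtain ⟨r0, _, hr0⟩ := Finset.exists_mem_eq_inf' (Finset.univ_nonempty (α := Fin (n+1))) f
    obtain ⟨rx, hrx⟩ := hx
    have hle : Finset.univ.inf' Finset.univ_nonempty f ≤ f rx :=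
      Finset.inf'_le f (Finset.mem_univ rx)
    rcases hrange r0 with h | h | h | h
    · exact Or.inl (hr0.trans h)
    · exact Or.inr (Or.inl (hr0.trans h))
    · exact Or.inr (Or.inr (hr0.trans h))
    · exfalso
      rw [hr0, h] at hle
      rcases hrx with h' | h' | h' <;> linarith

/-- uniqueness of weight-`t` and weight-`(1 - t)` outputs of `Lⁿ`
given that the truncation to the first `m` colors has a weight in `{t, 1 - t}`. -/
theorem Ln_unique_t_outputs (t : ℝ) (ht0 : 0 < t) (ht1 : t < 1) (ht2 : t ≠ 1 / 2)
    (m n : ℕ) (hmn : m ≤ n)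
    (fi fj fk fl : Fin (m + 1) → Bool)
    (hw : Ln t fi fj fk fl = t ∨ Ln t fi fj fk fl = 1 - t)
    (i j : Fin (n + 1) → Bool)
    (hi : (fun r : Fin (m + 1) => i (Fin.castLE (by omega) r)) = fi)
    (hj : (fun r : Fin (m + 1) => j (Fin.castLE (by omega) r)) = fj) :
    (∃! p : (Fin (n + 1) → Bool) × (Fin (n + 1) → Bool), Ln t i j p.1 p.2 = t) ∧
    (∃! p : (Fin (n + 1) → Bool) × (Fin (n + 1) → Bool), Ln t i j p.1 p.2 = 1 - t) ∧
    (∀ k l : Fin (n + 1) → Bool,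
      Ln t i j k l ≠ t → Ln t i j k l ≠ 1 - t → Ln t i j k l = 0) := by
  classical
  have hm1 : m + 1 ≤ n + 1 := by omega
  have hi' : (fun r : Fin (m + 1) => i (Fin.castLE hm1 r)) = fi := hi
  have hj' : (fun r : Fin (m + 1) => j (Fin.castLE hm1 r)) = fj := hj
  have hne : t ≠ 1 - t := fun h => ht2 (by linarith)
  -- a position where both input projections are `true`
  obtain ⟨rs, hrsA, hrsB⟩ : ∃ r : Fin (n+1), sproj i r = true ∧ sproj j r = true := by
    have hne0 : Ln t fi fj fk fl ≠ 0 := by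
      rcases hw with h | h <;> rw [h]
      · exact ht0.ne'
      · intro h'; linarith
    obtain ⟨r0, hr0⟩ := mminOver_attained t _ hne0
    have hv : L1 t (sproj fi r0) (sproj fj r0) (sproj fk r0) (sproj fl r0) = t ∨
        L1 t (sproj fi r0) (sproj fj r0) (sproj fk r0) (sproj fl r0) = 1 - t := by
      rcases hw with h | h
      · exact Or.inl (hr0.trans h)
      · exact Or.inr (hr0.trans h)
    obtain ⟨ha, hb⟩ := L1_tt_of ht0 ht1 ht2 _ _ _ _ hv
    refine ⟨Fin.castLE hm1 r0, ?_, ?_⟩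
    · rw [← sproj_castLE hm1 i r0, hi']; exact ha
    · rw [← sproj_castLE hm1 j r0, hj']; exact hb
  have hrange : ∀ (k l : Fin (n+1) → Bool) (r : Fin (n+1)),
      L1 t (sproj i r) (sproj j r) (sproj k r) (sproj l r) = 0 ∨
      L1 t (sproj i r) (sproj j r) (sproj k r) (sproj l r) = t ∨
      L1 t (sproj i r) (sproj j r) (sproj k r) (sproj l r) = 1 - t ∨
      L1 t (sproj i r) (sproj j r) (sproj k r) (sproj l r) = 1 :=
    fun k l r => L1_range ht0 ht1 ht2 _ _ _ _
  -- Part 1: the unique `t`-output is `(i, j)`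
  have part1 : ∃! p : (Fin (n + 1) → Bool) × (Fin (n + 1) → Bool), Ln t i j p.1 p.2 = t := by
    refine ⟨(i, j), ?_, ?_⟩
    · unfold Ln
      beta_reduce
      rw [mminOver_eq_iff t _ ht0 ht1.le hne (hrange i j)]
      constructor
      · intro r
        exact (L1_eq_t_or_one ht0 ht1 ht2 _ _ _ _).mpr ⟨rfl, rfl⟩
      · exact ⟨rs, by rw [hrsA, hrsB]; simp [L1]⟩
    · rintro ⟨k, l⟩ hp
      unfold Ln at hp
      rw [mminOver_eq_iff t _ ht0 ht1.le hne (hrange k l)] at hp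
      have hp' := hp
      have heq : ∀ r, sproj k r = sproj i r ∧ sproj l r = sproj j r := by
        intro r
        exact (L1_eq_t_or_one ht0 ht1 ht2 _ _ _ _).mp (hp'.1 r)
      have hk : k = i := sproj_injective (funext fun r => (heq r).1)
      have hl : l = j := sproj_injective (funext fun r => (heq r).2)
      simp [hk, hl]
  -- Part 2: the unique `(1-t)`-output
  have ht0' : (0:ℝ) < 1 - t := by linarith
  have ht1' : (1:ℝ) - t ≤ 1 := by linarith
  have hne' : 1 - t ≠ 1 - (1 - t) := by intro h; exact ht2 (by linarith)
  have hrange' : ∀ (k l : Fin (n+1) → Bool) (r : Fin (n+1)),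
      L1 t (sproj i r) (sproj j r) (sproj k r) (sproj l r) = 0 ∨
      L1 t (sproj i r) (sproj j r) (sproj k r) (sproj l r) = 1 - t ∨
      L1 t (sproj i r) (sproj j r) (sproj k r) (sproj l r) = 1 - (1 - t) ∨
      L1 t (sproj i r) (sproj j r) (sproj k r) (sproj l r) = 1 := by
    intro k l r
    have := hrange k l r
    rw [show (1:ℝ) - (1 - t) = t by ring]
    rcases this with h | h | h | h
    · exact Or.inl h
    · exact Or.inr (Or.inr (Or.inl h))
    · exact Or.inr (Or.inl h)
    · exact Or.inr (Or.inr (Or.inr h))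
  have part2 : ∃! p : (Fin (n + 1) → Bool) × (Fin (n + 1) → Bool), Ln t i j p.1 p.2 = 1 - t := by
    refine ⟨(unsproj (fun r => sproj i r && !(sproj j r)),
             unsproj (fun r => !(sproj i r) && sproj j r)), ?_, ?_⟩
    · unfold Ln
      beta_reduce
      rw [mminOver_symm]
      rw [mminOver_eq_iff (1 - t) _ ht0' ht1' hne' (by
        intro r
        simp only [sproj_unsproj]
        have := hrange' (unsproj (fun r => sproj i r && !(sproj j r)))
          (unsproj (fun r => !(sproj i r) && sproj j r)) r
        simp only [sproj_unsproj] at this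
        exact this)]
      constructor
      · intro r
        simp only [sproj_unsproj]
        exact (L1_eq_onet_or_one ht0 ht1 ht2 _ _ _ _).mpr ⟨rfl, rfl⟩
      · refine ⟨rs, ?_⟩
        simp only [sproj_unsproj]
        rw [hrsA, hrsB]
        simp [L1]
    · rintro ⟨k, l⟩ hp
      unfold Ln at hp
      rw [mminOver_symm] at hp
      rw [mminOver_eq_iff (1 - t) _ ht0' ht1' hne' (hrange' k l)] at hp
      have hp' := hp
      have heq : ∀ r, sproj k r = (sproj i r && !(sproj j r)) ∧
          sproj l r = (!(sproj i r) && sproj j r) := by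
        intro r
        exact (L1_eq_onet_or_one ht0 ht1 ht2 _ _ _ _).mp (hp'.1 r)
      have hk : k = unsproj (fun r => sproj i r && !(sproj j r)) := by
        have h' : sproj k = fun r => sproj i r && !(sproj j r) := funext fun r => (heq r).1
        rw [← unsproj_sproj k, h']
      have hl : l = unsproj (fun r => !(sproj i r) && sproj j r) := by
        have h' : sproj l = fun r => !(sproj i r) && sproj j r := funext fun r => (heq r).2
        rw [← unsproj_sproj l, h']
      simp [hk, hl]
  -- Part 3: all other outputs vanish
  refine ⟨part1, part2, fun k l hkt hk1t => ?_⟩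
  unfold Ln at hkt hk1t ⊢
  have h3 := mminOver_mem3 t (fun r => L1 t (sproj i r) (sproj j r) (sproj k r) (sproj l r))
    (hrange k l) ⟨rs, by
      show L1 t (sproj i rs) (sproj j rs) (sproj k rs) (sproj l rs) = 0 ∨
        L1 t (sproj i rs) (sproj j rs) (sproj k rs) (sproj l rs) = t ∨
        L1 t (sproj i rs) (sproj j rs) (sproj k rs) (sproj l rs) = 1 - t
      rw [hrsA, hrsB]
      exact L1_tt_mem ht0 ht1 ht2 _ _⟩ ht0 ht1
  rcases h3 with h | h | h
  · exact h
  · exact absurd h hkt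
  · exact absurd h hk1t
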